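/- The zeroth local cohomology module $H^0_{\mathfrak{m}}(A/\mathfrak{e}) = (\mathfrak{e} : \mathfrak{m}^\infty)/\mathfrak{e}$ is isomorphic as an $A$-module to $A/\mathfrak{m} = k$, where $\mathfrak{e} = (x^n, y^n, g)$, $\mathfrak{m} = (s,x,y)$, $g = xy(x-y)(x+y-sy)$. -/

import Mathlib

open MvPolynomial

namespace Stmt12Aux

open Finset

variable (k : Type*) [Field k]

local notation "R" => MvPolynomial (Fin 3) k

noncomputable section

def gg : R := X 1 * X 2 * (X 1 - X 2) * (X 1 + X 2 - X 0 * X 2)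

def qq (m : ℕ) : R := ∑ i ∈ range m, (X 1 ^ 2) ^ i * (X 2 ^ 2) ^ (m - 1 - i)

def zz (m : ℕ) : R := -(X 1 * X 2 ^ 2 * (X 1 - X 2) * qq k m) - X 1 * X 2 ^ (2 * m + 1)

def cc (m : ℕ) : R := ∑ i ∈ range m, (X 0 - 1) ^ (2 * i + 1)

def ee (m : ℕ) : Ideal R := Ideal.span {X 1 ^ (2 * m + 1), X 2 ^ (2 * m + 1), gg k}

def ms : Ideal R := Ideal.span {(X 0 : R), X 1, X 2}

def EE (m : ℕ) : Ideal R := ee k m ⊔ Ideal.span {zz k m}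

def psi (m : ℕ) (p : R) : k :=
  ∑ i ∈ range m, coeff (Finsupp.single 1 (2 * i + 2) + Finsupp.single 2 (2 * m - 2 * i)) p

variable {k}

lemma hq (m : ℕ) : qq k m * (X 1 ^ 2 - X 2 ^ 2) = X 1 ^ (2 * m) - X 2 ^ (2 * m) := by
  have := geom_sum₂_mul (X 1 ^ 2 : R) (X 2 ^ 2) m
  rw [qq, this, ← pow_mul, ← pow_mul]

lemma hsz (m : ℕ) : X 0 * zz k m =
    qq k m * gg k - X 2 * X 1 ^ (2 * m + 1) + (1 - X 0) * (X 1 * X 2 ^ (2 * m + 1)) := by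
  have h := hq (k := k) m
  rw [zz, gg]
  linear_combination (-(X 1 * X 2)) * h

lemma hxyz (m : ℕ) : (X 1 + X 2) * zz k m =
    -(X 2 ^ 2 * X 1 ^ (2 * m + 1)) - X 1 ^ 2 * X 2 ^ (2 * m + 1) := by
  have h := hq (k := k) m
  rw [zz]
  linear_combination (-(X 1 * X 2 ^ 2)) * h

lemma hdvd (m : ℕ) :
    (X 1 + X 2 - X 0 * X 2 : R) ∣ (X 1 * X 2 * qq k m - cc k m * X 2 ^ (2 * m)) := by
  have heq : X 1 * X 2 * qq k m - cc k m * X 2 ^ (2 * m) =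
      ∑ i ∈ range m, (X 1 ^ (2 * i + 1) - ((X 0 - 1) * X 2) ^ (2 * i + 1)) *
        ((X 2 ^ 2) ^ (m - 1 - i) * X 2) := by
    rw [qq, cc, Finset.mul_sum, Finset.sum_mul, ← Finset.sum_sub_distrib]
    refine Finset.sum_congr rfl fun i hi => ?_
    rw [Finset.mem_range] at hi
    obtain ⟨j, hj⟩ : ∃ j, m - 1 - i = j := ⟨_, rfl⟩
    have hmij : m = i + j + 1 := by omega
    rw [hj, hmij, mul_pow]
    ring
  rw [heq]
  refine Finset.dvd_sum fun i _ => ?_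
  refine Dvd.dvd.mul_right ?_ _
  have h2 : (X 1 + X 2 - X 0 * X 2 : R) = X 1 - (X 0 - 1) * X 2 := by ring
  rw [h2]
  refine ⟨∑ l ∈ range (2 * i + 1), X 1 ^ l * ((X 0 - 1) * X 2) ^ (2 * i + 1 - 1 - l), ?_⟩
  rw [← geom_sum₂_mul (X 1 : R) ((X 0 - 1) * X 2) (2 * i + 1)]
  ring

lemma hxz (m : ℕ) : ∃ h : R, X 1 * zz k m = h * gg k +
    (cc k m * X 1 * X 2 - (cc k m + 1) * X 1 ^ 2) * X 2 ^ (2 * m + 1) := by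
  obtain ⟨w, hw⟩ := hdvd (k := k) m
  refine ⟨-w, ?_⟩
  rw [zz, gg]
  linear_combination (-(X 1 * X 2 * (X 1 - X 2))) * hw

lemma mem_span3 {f1 f2 f3 : R} (a b c : R) :
    a * f1 + b * f2 + c * f3 ∈ Ideal.span {f1, f2, f3} := by
  refine add_mem (add_mem ?_ ?_) ?_ <;>
    exact Ideal.mul_mem_left _ _ (Ideal.subset_span (by simp))

lemma span3_rep {f1 f2 f3 p : R} (hp : p ∈ Ideal.span {f1, f2, f3}) :
    ∃ a b c : R, p = a * f1 + b * f2 + c * f3 := by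
  rw [Ideal.mem_span_insert] at hp
  obtain ⟨a, w, hw, rfl⟩ := hp
  rw [Ideal.mem_span_insert] at hw
  obtain ⟨b, u, hu, rfl⟩ := hw
  rw [Ideal.mem_span_singleton'] at hu
  obtain ⟨c, rfl⟩ := hu
  exact ⟨a, b, c, by ring⟩

lemma sz_mem (m : ℕ) : X 0 * zz k m ∈ ee k m := by
  rw [hsz]
  have h : qq k m * gg k - X 2 * X 1 ^ (2 * m + 1) + (1 - X 0) * (X 1 * X 2 ^ (2 * m + 1)) =
      (-(X 2)) * X 1 ^ (2 * m + 1) + ((1 - X 0) * X 1) * X 2 ^ (2 * m + 1) + qq k m * gg k := by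
    ring
  rw [h]
  exact mem_span3 _ _ _

lemma xz_mem (m : ℕ) : X 1 * zz k m ∈ ee k m := by
  obtain ⟨h, hh⟩ := hxz (k := k) m
  rw [hh]
  have h2 : h * gg k + (cc k m * X 1 * X 2 - (cc k m + 1) * X 1 ^ 2) * X 2 ^ (2 * m + 1) =
      (0 : R) * X 1 ^ (2 * m + 1) +
        ((cc k m * X 1 * X 2 - (cc k m + 1) * X 1 ^ 2)) * X 2 ^ (2 * m + 1) + h * gg k := by
    ring
  rw [h2]
  exact mem_span3 _ _ _

lemma yz_mem (m : ℕ) : X 2 * zz k m ∈ ee k m := by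
  have h1 := hxyz (k := k) m
  have h : X 2 * zz k m = (X 1 + X 2) * zz k m - X 1 * zz k m := by ring
  rw [h, h1]
  refine sub_mem ?_ (xz_mem m)
  have h2 : (-(X 2 ^ 2 * X 1 ^ (2 * m + 1)) - X 1 ^ 2 * X 2 ^ (2 * m + 1) : R) =
      (-(X 2 ^ 2)) * X 1 ^ (2 * m + 1) + (-(X 1 ^ 2)) * X 2 ^ (2 * m + 1) + 0 * gg k := by ring
  rw [h2]
  exact mem_span3 _ _ _

lemma z_mul_ms (m : ℕ) : ∀ p ∈ ms k, zz k m * p ∈ ee k m := by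
  intro p hp
  induction hp using Submodule.span_induction with
  | mem u hu =>
    rcases hu with rfl | rfl | rfl
    · rw [mul_comm]; exact sz_mem m
    · rw [mul_comm]; exact xz_mem m
    · rw [mul_comm]; exact yz_mem m
  | zero => simp
  | add u v _ _ hu hv => rw [mul_add]; exact add_mem hu hv
  | smul r u _ hu =>
    rw [smul_eq_mul, mul_comm r u, ← mul_assoc]
    exact Ideal.mul_mem_right _ _ hu

lemma primeX (i : Fin 3) : Prime (X i : R) := by
  have h0 : Prime (X (0 : Fin 3) : R) := by
    have hP : Prime ((MvPolynomial.finSuccEquiv k 2) (X 0)) := by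
      rw [finSuccEquiv_X_zero]
      exact Polynomial.prime_X
    exact (MulEquiv.prime_iff (p := (X 0 : R)) (MvPolynomial.finSuccEquiv k 2)).mp hP
  have hsw : (renameEquiv k (Equiv.swap (0 : Fin 3) i)).toRingEquiv.toMulEquiv (X 0) = (X i : R) := by
    simp [renameEquiv, rename_X]
  exact hsw ▸ (MulEquiv.prime_iff (p := (X 0 : R)) (renameEquiv k (Equiv.swap (0 : Fin 3) i)).toRingEquiv.toMulEquiv).mpr h0

lemma X_not_dvd {i j : Fin 3} (hij : i ≠ j) : ¬ ((X i : R) ∣ X j) := by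
  intro ⟨t, ht⟩
  have := congrArg (eval (fun l : Fin 3 => if l = j then (1 : k) else 0)) ht
  simp [hij] at this

lemma X_not_dvd_pow {i j : Fin 3} (hij : i ≠ j) (l : ℕ) : ¬ ((X i : R) ∣ (X j) ^ l) :=
  fun h => X_not_dvd hij ((primeX i).dvd_of_dvd_pow h)

lemma key (m : ℕ) (a b c : R)
    (h : c * (X 1 * X 2 * (X 1 - X 2) * (X 1 + X 2)) =
      a * X 1 ^ (2 * m + 1) + b * X 2 ^ (2 * m + 1)) :
    c ∈ Ideal.span {(X 1 : R) ^ (2 * m), X 2 ^ (2 * m), qq k m} := by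
  have hx : (X 1 : R) ∣ b * X 2 ^ (2 * m + 1) :=
    ⟨c * X 2 * (X 1 - X 2) * (X 1 + X 2) - a * X 1 ^ (2 * m), by linear_combination -h⟩
  rcases (primeX (1 : Fin 3)).2.2 _ _ hx with h1 | h1
  swap
  · exact absurd h1 (X_not_dvd_pow (by decide) _)
  obtain ⟨b₁, hb₁⟩ := h1
  have h2 : c * (X 2 * (X 1 - X 2) * (X 1 + X 2)) =
      a * X 1 ^ (2 * m) + b₁ * X 2 ^ (2 * m + 1) := by
    refine mul_left_cancel₀ (X_ne_zero (1 : Fin 3)) ?_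
    linear_combination h + X 2 ^ (2 * m + 1) * hb₁
  have hy : (X 2 : R) ∣ a * X 1 ^ (2 * m) :=
    ⟨c * (X 1 - X 2) * (X 1 + X 2) - b₁ * X 2 ^ (2 * m), by linear_combination -h2⟩
  rcases (primeX (2 : Fin 3)).2.2 _ _ hy with h3 | h3
  swap
  · exact absurd h3 (X_not_dvd_pow (by decide) _)
  obtain ⟨a₁, ha₁⟩ := h3
  have h4 : c * ((X 1 - X 2) * (X 1 + X 2)) = a₁ * X 1 ^ (2 * m) + b₁ * X 2 ^ (2 * m) := by
    refine mul_left_cancel₀ (X_ne_zero (2 : Fin 3)) ?_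
    linear_combination h2 + X 1 ^ (2 * m) * ha₁
  have h5 : X 1 ^ (2 * m) * (c - qq k m * a₁) = X 2 ^ (2 * m) * (c + qq k m * b₁) := by
    linear_combination qq k m * h4 - c * hq (k := k) m
  have h6 : (X 2 : R) ^ (2 * m) ∣ (c - qq k m * a₁) := by
    exact (primeX (2 : Fin 3)).pow_dvd_of_dvd_mul_left _
      (X_not_dvd_pow (i := 2) (j := 1) (by decide) (2 * m)) ⟨c + qq k m * b₁, h5⟩
  obtain ⟨d, hd⟩ := h6
  have h7 : c = 0 * X 1 ^ (2 * m) + d * X 2 ^ (2 * m) + a₁ * qq k m := by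
    linear_combination hd
  rw [h7]
  exact mem_span3 _ _ _

def sb : R →ₐ[k] R := aeval (fun i : Fin 3 => if i = 0 then 0 else X i)

lemma sb_X0 : sb (k := k) (X 0) = 0 := by simp [sb]
lemma sb_X1 : sb (k := k) (X 1) = X 1 := by simp [sb]
lemma sb_X2 : sb (k := k) (X 2) = X 2 := by simp [sb]

lemma s_dvd_sub_sb (p : R) : (X 0 : R) ∣ p - sb p := by
  induction p using MvPolynomial.induction_on with
  | C a => simp [sb]
  | add p q hp hq =>
    have h : p + q - sb (p + q) = (p - sb p) + (q - sb q) := by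
      rw [map_add]; ring
    rw [h]; exact dvd_add hp hq
  | mul_X p i hp =>
    have h : p * X i - sb (p * X i) = (p - sb p) * X i + sb p * (X i - sb (X i)) := by
      rw [map_mul]; ring
    rw [h]
    refine dvd_add (hp.mul_right _) ?_
    have hXi : (X 0 : R) ∣ (X i - sb (X i)) := by
      fin_cases i <;> simp [sb]
    exact hXi.mul_left _

/-! ### the functional psi -/

lemma pair_apply0 (a b : ℕ) :
    ((Finsupp.single (1 : Fin 3) a + Finsupp.single (2 : Fin 3) b : Fin 3 →₀ ℕ)) (0 : Fin 3) = 0 := by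
  simp [Finsupp.single_apply]

lemma pair_le {a b A B : ℕ} :
    (Finsupp.single (1 : Fin 3) a + Finsupp.single 2 b) ≤
      (Finsupp.single 1 A + Finsupp.single 2 B) ↔ a ≤ A ∧ b ≤ B := by
  rw [Finsupp.le_def]
  constructor
  · intro h
    constructor
    · have := h 1; simpa [Finsupp.single_apply] using this
    · have := h 2; simpa [Finsupp.single_apply] using this
  · rintro ⟨h1, h2⟩ i
    fin_cases i <;> simp [Finsupp.single_apply] <;> omega

lemma coeff_mul_pairpow (μ : Fin 3 →₀ ℕ) (e f : ℕ) (p : R) :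
    coeff μ (p * (X 1 ^ e * X 2 ^ f)) =
      if Finsupp.single (1 : Fin 3) e + Finsupp.single 2 f ≤ μ then
        coeff (μ - (Finsupp.single 1 e + Finsupp.single 2 f)) p else 0 := by
  rw [X_pow_eq_monomial, X_pow_eq_monomial, monomial_mul, mul_one, coeff_mul_monomial']
  split_ifs <;> simp

lemma psi_add (m : ℕ) (p q : R) : psi k m (p + q) = psi k m p + psi k m q := by
  simp [psi, coeff_add, Finset.sum_add_distrib]

lemma psi_sub (m : ℕ) (p q : R) : psi k m (p - q) = psi k m p - psi k m q := by
  simp [psi, coeff_sub, Finset.sum_sub_distrib]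

lemma psi_smul (m : ℕ) (a : k) (p : R) : psi k m (C a * p) = a * psi k m p := by
  simp [psi, coeff_C_mul, Finset.mul_sum]

lemma psi_s_mul (m : ℕ) (p : R) : psi k m (X 0 * p) = 0 := by
  refine Finset.sum_eq_zero fun i _ => ?_
  rw [coeff_X_mul', if_neg]
  simp [Finsupp.mem_support_iff, pair_apply0]

lemma psi_mul_xn (m : ℕ) (p : R) : psi k m (p * X 1 ^ (2 * m + 1)) = 0 := by
  have h : p * X 1 ^ (2 * m + 1) = p * (X 1 ^ (2 * m + 1) * X 2 ^ 0) := by ring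
  rw [h]
  refine Finset.sum_eq_zero fun i hi => ?_
  rw [Finset.mem_range] at hi
  rw [coeff_mul_pairpow, if_neg]
  rw [pair_le]
  rintro ⟨h1, -⟩
  omega

lemma psi_mul_yn (m : ℕ) (p : R) : psi k m (p * X 2 ^ (2 * m + 1)) = 0 := by
  have h : p * X 2 ^ (2 * m + 1) = p * (X 1 ^ 0 * X 2 ^ (2 * m + 1)) := by ring
  rw [h]
  refine Finset.sum_eq_zero fun i hi => ?_
  rw [Finset.mem_range] at hi
  rw [coeff_mul_pairpow, if_neg]
  rw [pair_le]
  rintro ⟨-, h2⟩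
  omega

lemma psi_mul_g (m : ℕ) (hm : 1 ≤ m) (p : R) : psi k m (p * gg k) = 0 := by
  obtain ⟨m', rfl⟩ : ∃ m', m = m' + 1 := ⟨m - 1, by omega⟩
  have hg : p * gg k = p * (X 1 ^ 3 * X 2 ^ 1) - p * (X 1 ^ 1 * X 2 ^ 3)
      - X 0 * (p * (X 1 ^ 2 * X 2 ^ 2)) + X 0 * (p * (X 1 ^ 1 * X 2 ^ 3)) := by
    rw [gg]; ring
  rw [hg, psi_add, psi_sub, psi_sub, psi_s_mul, psi_s_mul]
  have e1 : psi k (m' + 1) (p * (X 1 ^ 3 * X 2 ^ 1)) =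
      ∑ i ∈ range m',
        coeff (Finsupp.single (1 : Fin 3) (2 * i + 1) + Finsupp.single 2 (2 * m' - 2 * i - 1)) p := by
    simp only [psi]
    rw [Finset.sum_range_succ']
    have h0 : coeff (Finsupp.single (1 : Fin 3) (2 * 0 + 2) +
        Finsupp.single 2 (2 * (m' + 1) - 2 * 0)) (p * (X 1 ^ 3 * X 2 ^ 1)) = 0 := by
      rw [coeff_mul_pairpow, if_neg]
      rw [pair_le]
      rintro ⟨h1, -⟩
      omega
    rw [h0, add_zero]
    refine Finset.sum_congr rfl fun i hi => ?_
    rw [Finset.mem_range] at hi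
    rw [coeff_mul_pairpow, if_pos (pair_le.mpr ⟨by omega, by omega⟩)]
    congr 1
    ext l
    fin_cases l <;> simp [Finsupp.tsub_apply, Finsupp.single_apply] <;> omega
  have e2 : psi k (m' + 1) (p * (X 1 ^ 1 * X 2 ^ 3)) =
      ∑ i ∈ range m',
        coeff (Finsupp.single (1 : Fin 3) (2 * i + 1) + Finsupp.single 2 (2 * m' - 2 * i - 1)) p := by
    simp only [psi]
    rw [Finset.sum_range_succ]
    have h0 : coeff (Finsupp.single (1 : Fin 3) (2 * m' + 2) +
        Finsupp.single 2 (2 * (m' + 1) - 2 * m')) (p * (X 1 ^ 1 * X 2 ^ 3)) = 0 := by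
      rw [coeff_mul_pairpow, if_neg]
      rw [pair_le]
      rintro ⟨-, h2⟩
      omega
    rw [h0, add_zero]
    refine Finset.sum_congr rfl fun i hi => ?_
    rw [Finset.mem_range] at hi
    rw [coeff_mul_pairpow, if_pos (pair_le.mpr ⟨by omega, by omega⟩)]
    congr 1
    ext l
    fin_cases l <;> simp [Finsupp.tsub_apply, Finsupp.single_apply] <;> omega
  rw [e1, e2]
  ring

lemma psi_e (m : ℕ) (hm : 1 ≤ m) {v : R} (hv : v ∈ ee k m) : psi k m v = 0 := by
  obtain ⟨a, b, c, rfl⟩ := span3_rep hv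
  rw [psi_add, psi_add, psi_mul_xn, psi_mul_yn, psi_mul_g m hm]
  ring

lemma qq_monomial (m j : ℕ) : ((X 1 : R) ^ 2) ^ j * (X 2 ^ 2) ^ (m - 1 - j) =
    monomial (Finsupp.single (1 : Fin 3) (2 * j) + Finsupp.single 2 (2 * (m - 1 - j))) 1 := by
  rw [← pow_mul, ← pow_mul, X_pow_eq_monomial, X_pow_eq_monomial, monomial_mul, mul_one]

lemma coeff_qq_odd (m A B : ℕ) :
    coeff (Finsupp.single (1 : Fin 3) (2 * A + 1) + Finsupp.single 2 B) (qq k m) = 0 := by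
  simp only [qq]
  rw [coeff_sum]
  refine Finset.sum_eq_zero fun j _ => ?_
  rw [qq_monomial, coeff_monomial, if_neg]
  intro hEq
  have := DFunLike.congr_fun hEq 1
  simp [Finsupp.single_apply] at this
  omega

lemma coeff_qq (m i : ℕ) (hi : i < m) :
    coeff (Finsupp.single (1 : Fin 3) (2 * i) + Finsupp.single 2 (2 * m - 2 - 2 * i))
      (qq k m) = 1 := by
  simp only [qq]
  rw [coeff_sum]
  rw [Finset.sum_eq_single_of_mem i (Finset.mem_range.mpr hi)]
  · rw [qq_monomial, coeff_monomial, if_pos]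
    ext l
    fin_cases l <;> simp [Finsupp.single_apply] <;> omega
  · intro j hj hne
    rw [qq_monomial, coeff_monomial, if_neg]
    intro hEq
    have := DFunLike.congr_fun hEq 1
    simp [Finsupp.single_apply] at this
    omega

lemma psi_z (m : ℕ) : psi k m (zz k m) = -(m : k) := by
  have hz : zz k m = qq k m * (X 1 ^ 1 * X 2 ^ 3) - qq k m * (X 1 ^ 2 * X 2 ^ 2)
      - (1 : R) * (X 1 ^ 1 * X 2 ^ (2 * m + 1)) := by
    rw [zz]; ring
  rw [hz, psi_sub, psi_sub]
  have e1 : psi k m (qq k m * (X 1 ^ 1 * X 2 ^ 3)) = 0 := by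
    refine Finset.sum_eq_zero fun i hi => ?_
    rw [Finset.mem_range] at hi
    rw [coeff_mul_pairpow]
    split_ifs with h
    · have hsub : (Finsupp.single (1 : Fin 3) (2 * i + 2) + Finsupp.single 2 (2 * m - 2 * i)) -
          (Finsupp.single 1 1 + Finsupp.single 2 3) =
          Finsupp.single (1 : Fin 3) (2 * i + 1) + Finsupp.single 2 (2 * m - 2 * i - 3) := by
        ext l
        fin_cases l <;> simp [Finsupp.tsub_apply, Finsupp.single_apply] <;> omega
      rw [hsub]
      exact coeff_qq_odd m i _
    · rfl
  have e2 : psi k m (qq k m * (X 1 ^ 2 * X 2 ^ 2)) = (m : k) := by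
    have : ∀ i ∈ range m, coeff (Finsupp.single (1 : Fin 3) (2 * i + 2) +
        Finsupp.single 2 (2 * m - 2 * i)) (qq k m * (X 1 ^ 2 * X 2 ^ 2)) = 1 := by
      intro i hi
      rw [Finset.mem_range] at hi
      rw [coeff_mul_pairpow, if_pos (pair_le.mpr ⟨by omega, by omega⟩)]
      have hsub : (Finsupp.single (1 : Fin 3) (2 * i + 2) + Finsupp.single 2 (2 * m - 2 * i)) -
          (Finsupp.single 1 2 + Finsupp.single 2 2) =
          Finsupp.single (1 : Fin 3) (2 * i) + Finsupp.single 2 (2 * m - 2 - 2 * i) := by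
        ext l
        fin_cases l <;> simp [Finsupp.tsub_apply, Finsupp.single_apply] <;> omega
      rw [hsub]
      exact coeff_qq m i hi
    rw [psi, Finset.sum_congr rfl this]
    simp
  have e3 : psi k m ((1 : R) * (X 1 ^ 1 * X 2 ^ (2 * m + 1))) = 0 := by
    refine Finset.sum_eq_zero fun i hi => ?_
    rw [Finset.mem_range] at hi
    rw [coeff_mul_pairpow, if_neg]
    rw [pair_le]
    rintro ⟨-, h2⟩
    omega
  rw [e1, e2, e3]
  ring

lemma sb_gg : sb (k := k) (gg k) = X 1 * X 2 * (X 1 - X 2) * (X 1 + X 2) := by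
  rw [gg, map_mul, map_mul, map_mul, map_sub, map_sub, map_add, map_mul, sb_X0, sb_X1, sb_X2]
  ring

lemma colon_s (m : ℕ) (v : R) (hv : X 0 * v ∈ ee k m) : v ∈ EE k m := by
  obtain ⟨a, b, c, hrep⟩ := span3_rep hv
  have h0 : (0 : R) = sb a * X 1 ^ (2 * m + 1) + sb b * X 2 ^ (2 * m + 1) +
      sb c * (X 1 * X 2 * (X 1 - X 2) * (X 1 + X 2)) := by
    have h := congrArg (sb (k := k)) hrep
    rw [map_mul, sb_X0, zero_mul, map_add, map_add, map_mul, map_mul, map_mul,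
      map_pow, map_pow, sb_X1, sb_X2, sb_gg] at h
    exact h
  have hkey : sb c ∈ Ideal.span {(X 1 : R) ^ (2 * m), X 2 ^ (2 * m), qq k m} := by
    refine key m (-(sb a)) (-(sb b)) (sb c) ?_
    linear_combination -h0
  obtain ⟨α, β, γ, hc0⟩ := span3_rep hkey
  obtain ⟨a₁, ha₁⟩ := s_dvd_sub_sb a
  obtain ⟨b₁, hb₁⟩ := s_dvd_sub_sb b
  obtain ⟨c₁, hc₁⟩ := s_dvd_sub_sb c
  have hv' : v = a₁ * X 1 ^ (2 * m + 1) + b₁ * X 2 ^ (2 * m + 1) +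
      c₁ * (X 1 * X 2 * (X 1 - X 2) * (X 1 + X 2 - X 0 * X 2)) -
      sb c * (X 1 * X 2 ^ 2 * (X 1 - X 2)) := by
    refine mul_left_cancel₀ (X_ne_zero (0 : Fin 3)) ?_
    rw [gg] at hrep
    linear_combination hrep + X 1 ^ (2 * m + 1) * ha₁ + X 2 ^ (2 * m + 1) * hb₁ +
      (X 1 * X 2 * (X 1 - X 2) * (X 1 + X 2 - X 0 * X 2)) * hc₁ - h0
  have hfin : v = (a₁ - α * X 2 ^ 2 * (X 1 - X 2)) * X 1 ^ (2 * m + 1) +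
      (b₁ - β * X 1 * (X 1 - X 2) * X 2 + γ * X 1) * X 2 ^ (2 * m + 1) +
      c₁ * gg k + γ * zz k m := by
    rw [zz, gg]
    linear_combination hv' - (X 1 * X 2 ^ 2 * (X 1 - X 2)) * hc0
  rw [hfin]
  exact Submodule.add_mem _ (Ideal.mem_sup_left (mem_span3 _ _ _))
    (Ideal.mem_sup_right (Ideal.mem_span_singleton'.mpr ⟨γ, rfl⟩))
lemma mem_ms_of_cc {p : R} (h : constantCoeff p = 0) : p ∈ ms k := by
  have hset : ({(X 0 : R), X 1, X 2} : Set (MvPolynomial (Fin 3) k)) = X '' Set.univ := by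
    ext u
    constructor
    · rintro (rfl | rfl | rfl) <;> exact ⟨_, Set.mem_univ _, rfl⟩
    · rintro ⟨i, -, rfl⟩
      fin_cases i <;> simp
  rw [ms, hset, mem_ideal_span_X_image]
  intro mo hmo
  by_contra h'
  push_neg at h'
  have hz : mo = 0 := Finsupp.ext fun i => h' i (Set.mem_univ i)
  rw [mem_support_iff, hz] at hmo
  rw [constantCoeff_eq] at h
  exact hmo h

lemma X0_mem_ms : (X 0 : R) ∈ ms k := Ideal.subset_span (by simp)

lemma sat_le (m : ℕ) (hm : 4 ≤ m) (hchar : (m : k) ≠ 0) :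
    ∀ i : ℕ, (ee k m).colon ((ms k ^ i : Ideal R) : Set R) ≤ EE k m := by
  intro i
  induction i with
  | zero =>
    intro v hv
    have h := Submodule.mem_colon.mp hv 1 (by rw [pow_zero, Ideal.one_eq_top]; trivial)
    rw [smul_eq_mul, mul_one] at h
    exact Ideal.mem_sup_left h
  | succ i ih =>
    intro v hv
    have hsv : X 0 * v ∈ (ee k m).colon ((ms k ^ i : Ideal R) : Set R) := by
      rw [Submodule.mem_colon]
      intro p hp
      have hmem : p * X 0 ∈ ms k ^ (i + 1) := by
        rw [pow_succ]
        exact Ideal.mul_mem_mul hp X0_mem_ms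
      have h2 := Submodule.mem_colon.mp hv _ hmem
      rw [smul_eq_mul] at h2 ⊢
      have heq : X 0 * v * p = v * (p * X 0) := by ring
      rw [heq]
      exact h2
    have hE := ih hsv
    rw [EE, Submodule.mem_sup] at hE
    obtain ⟨w, hw, u, hu, heq⟩ := hE
    rw [Ideal.mem_span_singleton'] at hu
    obtain ⟨r, hr⟩ := hu
    set c₀ := constantCoeff r with hc₀
    have hr₀ : r - C c₀ ∈ ms k := by
      apply mem_ms_of_cc
      rw [map_sub, constantCoeff_C, hc₀, sub_self]
    have h1 : X 0 * v - C c₀ * zz k m = w + zz k m * (r - C c₀) := by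
      rw [← heq, ← hr]; ring
    have hmem : X 0 * v - C c₀ * zz k m ∈ ee k m := by
      rw [h1]
      exact add_mem hw (z_mul_ms m _ hr₀)
    have hpsi := psi_e m (by omega) hmem
    rw [psi_sub, psi_s_mul, psi_smul, psi_z] at hpsi
    have hcm : c₀ * (m : k) = 0 := by linear_combination hpsi
    have hc0 : c₀ = 0 := by
      rcases mul_eq_zero.mp hcm with h | h
      · exact h
      · exact absurd h hchar
    have hfin : X 0 * v ∈ ee k m := by
      have h3 := hmem
      rw [hc0, map_zero, zero_mul, sub_zero] at h3
      exact h3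
    exact colon_s m v hfin

lemma z_in_sat (m : ℕ) :
    zz k m ∈ ⨆ i : ℕ, (ee k m).colon ((ms k ^ i : Ideal R) : Set R) := by
  have h1 : zz k m ∈ (ee k m).colon ((ms k ^ 1 : Ideal R) : Set R) := by
    rw [pow_one, Submodule.mem_colon]
    intro p hp
    rw [smul_eq_mul]
    exact z_mul_ms m p hp
  exact (le_iSup (fun i => (ee k m).colon ((ms k ^ i : Ideal R) : Set R)) 1) h1

lemma map_sat_eq (m : ℕ) (hm : 4 ≤ m) (hchar : (m : k) ≠ 0) :
    Submodule.map (Submodule.mkQ (ee k m)) (⨆ i : ℕ, (ee k m).colon ((ms k ^ i : Ideal R) : Set R)) =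
      Submodule.span (MvPolynomial (Fin 3) k) {Submodule.mkQ (ee k m) (zz k m)} := by
  apply le_antisymm
  · rw [Submodule.map_le_iff_le_comap]
    refine iSup_le fun i => (sat_le m hm hchar i).trans ?_
    intro v hv
    rw [EE, Submodule.mem_sup] at hv
    obtain ⟨w, hw, u, hu, heq⟩ := hv
    rw [Ideal.mem_span_singleton'] at hu
    obtain ⟨r, hr⟩ := hu
    rw [Submodule.mem_comap, ← heq, map_add]
    have hw0 : Submodule.mkQ (ee k m) w = 0 := by
      rw [Submodule.mkQ_apply, Submodule.Quotient.mk_eq_zero]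
      exact hw
    rw [hw0, zero_add, ← hr]
    refine Submodule.mem_span_singleton.mpr ⟨r, ?_⟩
    rw [← map_smul, smul_eq_mul]
  · rw [Submodule.span_le, Set.singleton_subset_iff]
    exact ⟨zz k m, z_in_sat m, rfl⟩

lemma ker_eq (m : ℕ) (hm : 4 ≤ m) (hchar : (m : k) ≠ 0) :
    LinearMap.ker (LinearMap.toSpanSingleton (MvPolynomial (Fin 3) k)
      (MvPolynomial (Fin 3) k ⧸ (ee k m : Ideal (MvPolynomial (Fin 3) k)))
      (Submodule.mkQ (ee k m) (zz k m))) = ms k := by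
  ext r
  rw [LinearMap.mem_ker, LinearMap.toSpanSingleton_apply, ← map_smul, smul_eq_mul,
    Submodule.mkQ_apply, Submodule.Quotient.mk_eq_zero]
  constructor
  · intro h
    set c₀ := constantCoeff r with hc₀
    have hr₀ : r - C c₀ ∈ ms k := by
      apply mem_ms_of_cc
      rw [map_sub, constantCoeff_C, hc₀, sub_self]
    have h1 : C c₀ * zz k m ∈ ee k m := by
      have h2 : C c₀ * zz k m = r * zz k m - zz k m * (r - C c₀) := by ring
      rw [h2]
      exact sub_mem h (z_mul_ms m _ hr₀)
    by_cases hc : c₀ = 0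
    · have : r = r - C c₀ := by rw [hc, map_zero, sub_zero]
      rw [this]
      exact hr₀
    · exfalso
      have hzin : zz k m ∈ ee k m := by
        have h3 : zz k m = C c₀⁻¹ * (C c₀ * zz k m) := by
          rw [← mul_assoc, ← map_mul, inv_mul_cancel₀ hc, map_one, one_mul]
        rw [h3]
        exact Ideal.mul_mem_left _ _ h1
      have h4 := psi_e m (by omega) hzin
      rw [psi_z] at h4
      have h5 : (m : k) = 0 := by linear_combination -h4
      exact hchar h5
  · intro h
    rw [mul_comm]
    exact z_mul_ms m r h

end

end Stmt12Aux

open Stmt12Aux in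
theorem stmt_12 (k : Type*) [Field k] (m n : ℕ) (hm : 4 ≤ m) (hchar : (m : k) ≠ 0)
    (hn : n = 2 * m + 1) :
    Nonempty
      ((↥(Submodule.map
          (Submodule.mkQ (Ideal.span {(X 1 : MvPolynomial (Fin 3) k) ^ n, X 2 ^ n,
            X 1 * X 2 * (X 1 - X 2) * (X 1 + X 2 - X 0 * X 2)} : Ideal (MvPolynomial (Fin 3) k)))
          (⨆ i : ℕ, Submodule.colon
            (Ideal.span {(X 1 : MvPolynomial (Fin 3) k) ^ n, X 2 ^ n,
              X 1 * X 2 * (X 1 - X 2) * (X 1 + X 2 - X 0 * X 2)})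
            (((Ideal.span {(X 0 : MvPolynomial (Fin 3) k), X 1, X 2}) ^ i : Ideal (MvPolynomial (Fin 3) k)) : Set (MvPolynomial (Fin 3) k))))) ≃ₗ[MvPolynomial (Fin 3) k]
        (MvPolynomial (Fin 3) k ⧸
          (Ideal.span {(X 0 : MvPolynomial (Fin 3) k), X 1, X 2} : Ideal (MvPolynomial (Fin 3) k)))) := by
  subst hn
  have hmap := map_sat_eq (k := k) m hm hchar
  have hker := ker_eq (k := k) m hm hchar
  refine ⟨?_⟩
  have hrange : Submodule.span (MvPolynomial (Fin 3) k)
      {Submodule.mkQ (ee k m) (zz k m)} =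
      LinearMap.range (LinearMap.toSpanSingleton (MvPolynomial (Fin 3) k)
        (MvPolynomial (Fin 3) k ⧸ (ee k m : Ideal (MvPolynomial (Fin 3) k)))
        (Submodule.mkQ (ee k m) (zz k m))) :=
    LinearMap.span_singleton_eq_range _ _ _
  exact (LinearEquiv.ofEq _ _ (hmap.trans hrange)).trans
    ((LinearMap.toSpanSingleton (MvPolynomial (Fin 3) k)
        (MvPolynomial (Fin 3) k ⧸ (ee k m : Ideal (MvPolynomial (Fin 3) k)))
        (Submodule.mkQ (ee k m) (zz k m))).quotKerEquivRange.symm.trans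
      (Submodule.quotEquivOfEq _ _ hker))
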